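/- arXiv:1507.00535 — 7 statements merged into one kernel-verified Lean document; each statement's English description precedes it below -/
import Mathlib

section
/- Let A ∈ ℝ^{s×s}, b ∈ ℝ^s, B = diag(b) with all b_i ≠ 0, and suppose BA + AᵀB = bbᵀ (symplecticity). Let F = diag(F₁,…,F_s) with F_i ∈ ℝ^{n×n}. Then det(I_{sn} - h((A - 𝟙bᵀ) ⊗ I_n) F) = det(I_{sn} + h(Aᵀ ⊗ I_n) F). -/
open Matrix Kronecker

theorem stmt_11 {s n : ℕ} (A : Matrix (Fin s) (Fin s) ℝ) (b : Fin s → ℝ)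
    (hb : ∀ i, b i ≠ 0)
    (hsympl : Matrix.diagonal b * A + Aᵀ * Matrix.diagonal b = Matrix.vecMulVec b b)
    (Fblocks : Fin s → Matrix (Fin n) (Fin n) ℝ) (h : ℝ) :
    ((1 : Matrix (Fin s × Fin n) (Fin s × Fin n) ℝ)
        - h • (((A - Matrix.vecMulVec (fun _ => (1 : ℝ)) b) ⊗ₖ (1 : Matrix (Fin n) (Fin n) ℝ)) *
            Matrix.of (fun p q : Fin s × Fin n =>
              if p.1 = q.1 then Fblocks p.1 p.2 q.2 else 0))).det
      = ((1 : Matrix (Fin s × Fin n) (Fin s × Fin n) ℝ)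
        + h • ((Aᵀ ⊗ₖ (1 : Matrix (Fin n) (Fin n) ℝ)) *
            Matrix.of (fun p q : Fin s × Fin n =>
              if p.1 = q.1 then Fblocks p.1 p.2 q.2 else 0))).det := by
  set G : Matrix (Fin s × Fin n) (Fin s × Fin n) ℝ :=
    Matrix.of (fun p q : Fin s × Fin n =>
      if p.1 = q.1 then Fblocks p.1 p.2 q.2 else 0) with hG
  set D : Matrix (Fin s × Fin n) (Fin s × Fin n) ℝ :=
    Matrix.diagonal (fun p => b p.1) with hD
  have hentry : ∀ i j, b i * A i j + Aᵀ i j * b j = b i * b j := by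
    intro i j
    have := congrFun (congrFun hsympl i) j
    simpa [Matrix.mul_apply, Matrix.diagonal, Matrix.vecMulVec, Finset.mul_sum,
      Finset.sum_ite_eq, Finset.sum_ite_eq', mul_comm] using this
  have hDG : D * G = G * D := by
    ext ⟨i, x⟩ ⟨j, y⟩
    simp only [hD, Matrix.diagonal_mul, Matrix.mul_diagonal, hG, Matrix.of_apply]
    by_cases hij : i = j
    · subst hij; ring
    · simp [hij]
  have hDK : D * ((A - Matrix.vecMulVec (fun _ => (1 : ℝ)) b) ⊗ₖ (1 : Matrix (Fin n) (Fin n) ℝ))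
      = -((Aᵀ ⊗ₖ (1 : Matrix (Fin n) (Fin n) ℝ)) * D) := by
    ext ⟨i, x⟩ ⟨j, y⟩
    simp only [hD, Matrix.diagonal_mul, Matrix.mul_diagonal, Matrix.neg_apply,
      Matrix.kroneckerMap_apply, Matrix.sub_apply, Matrix.vecMulVec_apply]
    have := hentry i j
    by_cases hxy : x = y
    · subst hxy
      simp only [Matrix.one_apply_eq]
      nlinarith [hentry i j]
    · simp [Matrix.one_apply_ne hxy]
  have key : D * ((1 : Matrix (Fin s × Fin n) (Fin s × Fin n) ℝ)
        - h • (((A - Matrix.vecMulVec (fun _ => (1 : ℝ)) b) ⊗ₖ (1 : Matrix (Fin n) (Fin n) ℝ)) * G))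
      = ((1 : Matrix (Fin s × Fin n) (Fin s × Fin n) ℝ)
        + h • ((Aᵀ ⊗ₖ (1 : Matrix (Fin n) (Fin n) ℝ)) * G)) * D := by
    have : D * (((A - Matrix.vecMulVec (fun _ => (1 : ℝ)) b) ⊗ₖ (1 : Matrix (Fin n) (Fin n) ℝ)) * G)
        = -((Aᵀ ⊗ₖ (1 : Matrix (Fin n) (Fin n) ℝ)) * G * D) := by
      calc D * (((A - Matrix.vecMulVec (fun _ => (1 : ℝ)) b) ⊗ₖ (1 : Matrix (Fin n) (Fin n) ℝ)) * G)
          = (D * ((A - Matrix.vecMulVec (fun _ => (1 : ℝ)) b) ⊗ₖ (1 : Matrix (Fin n) (Fin n) ℝ))) * G := by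
            rw [Matrix.mul_assoc]
        _ = -((Aᵀ ⊗ₖ (1 : Matrix (Fin n) (Fin n) ℝ)) * D) * G := by rw [hDK]
        _ = -((Aᵀ ⊗ₖ (1 : Matrix (Fin n) (Fin n) ℝ)) * (D * G)) := by
            rw [Matrix.neg_mul, Matrix.mul_assoc]
        _ = -((Aᵀ ⊗ₖ (1 : Matrix (Fin n) (Fin n) ℝ)) * (G * D)) := by rw [hDG]
        _ = -((Aᵀ ⊗ₖ (1 : Matrix (Fin n) (Fin n) ℝ)) * G * D) := by rw [Matrix.mul_assoc]
    rw [Matrix.mul_sub, Matrix.mul_smul, this, Matrix.add_mul, Matrix.mul_one, Matrix.one_mul,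
      Matrix.smul_mul, smul_neg, sub_neg_eq_add]
  have hDdet : D.det ≠ 0 := by
    rw [hD, Matrix.det_diagonal]
    exact Finset.prod_ne_zero_iff.mpr (fun p _ => hb p.1)
  have := congrArg Matrix.det key
  rw [Matrix.det_mul, Matrix.det_mul] at this
  have := mul_left_cancel₀ hDdet (this.trans (mul_comm _ _))
  exact this
end

section
/- Let A ∈ ℝ^{s×s} and let P ∈ ℝ^{n×n} be invertible. Let F = diag(F₁,…,F_s) with each F_i ∈ ℝ^{n×n} satisfying P F_i P⁻¹ = -F_iᵀ. Then det(I_{sn} - h(A ⊗ I_n) F) = det(I_{sn} + h(Aᵀ ⊗ I_n) F) for all h. -/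
open Matrix Kronecker

theorem stmt_12 {s n : ℕ} (A : Matrix (Fin s) (Fin s) ℝ)
    (P : Matrix (Fin n) (Fin n) ℝ) (hP : IsUnit P.det)
    (Fblocks : Fin s → Matrix (Fin n) (Fin n) ℝ)
    (hF : ∀ i, P * Fblocks i * P⁻¹ = -(Fblocks i)ᵀ) :
    ∀ h : ℝ,
      ((1 : Matrix (Fin s × Fin n) (Fin s × Fin n) ℝ)
          - h • ((A ⊗ₖ (1 : Matrix (Fin n) (Fin n) ℝ)) *
              Matrix.of (fun p q : Fin s × Fin n =>
                if p.1 = q.1 then Fblocks p.1 p.2 q.2 else 0))).det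
        = ((1 : Matrix (Fin s × Fin n) (Fin s × Fin n) ℝ)
          + h • ((Aᵀ ⊗ₖ (1 : Matrix (Fin n) (Fin n) ℝ)) *
              Matrix.of (fun p q : Fin s × Fin n =>
                if p.1 = q.1 then Fblocks p.1 p.2 q.2 else 0))).det := by
  intro h
  set Fm : Matrix (Fin s × Fin n) (Fin s × Fin n) ℝ :=
    Matrix.of (fun p q : Fin s × Fin n =>
      if p.1 = q.1 then Fblocks p.1 p.2 q.2 else 0) with hFm
  set M : Matrix (Fin s × Fin n) (Fin s × Fin n) ℝ :=
    A ⊗ₖ (1 : Matrix (Fin n) (Fin n) ℝ) with hM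
  set Q : Matrix (Fin s × Fin n) (Fin s × Fin n) ℝ :=
    (1 : Matrix (Fin s) (Fin s) ℝ) ⊗ₖ P with hQ
  -- block relation : P * Fᵢ = -Fᵢᵀ * P
  have hPF : ∀ i, P * Fblocks i = -(Fblocks i)ᵀ * P := by
    intro i
    calc P * Fblocks i = P * Fblocks i * P⁻¹ * P := by
          rw [Matrix.mul_assoc, Matrix.nonsing_inv_mul P hP, Matrix.mul_one]
      _ = -(Fblocks i)ᵀ * P := by rw [hF i]
  -- Q is invertible
  have hQdet : IsUnit Q.det := by
    rw [hQ, Matrix.det_kronecker]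
    simpa using hP.pow _
  have hQunit : IsUnit Q := (Matrix.isUnit_iff_isUnit_det _).mpr hQdet
  -- Q commutes with M
  have hQM : Q * M = M * Q := by
    rw [hQ, hM, ← Matrix.mul_kronecker_mul, ← Matrix.mul_kronecker_mul,
      Matrix.one_mul, Matrix.mul_one, Matrix.one_mul, Matrix.mul_one]
  -- Q * Fm = -Fmᵀ * Q
  have hQF : Q * Fm = -Fmᵀ * Q := by
    ext ⟨i, a⟩ ⟨j, b⟩
    simp only [hQ, hFm, Matrix.mul_apply, Fintype.sum_prod_type,
      Matrix.kroneckerMap_apply, Matrix.one_apply, Matrix.neg_apply,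
      Matrix.transpose_apply, Matrix.of_apply]
    simp only [ite_mul, mul_ite, one_mul, zero_mul, mul_zero,
      Finset.sum_ite_eq, Finset.sum_ite_eq', Finset.mem_univ, if_true]
    by_cases hij : i = j
    · subst hij
      simp only [if_pos rfl, eq_comm]
      have := congrArg (fun X => X a b) (hPF i)
      simpa [Matrix.mul_apply, Matrix.neg_apply, Matrix.transpose_apply,
        Finset.sum_comm, neg_mul, Finset.sum_neg_distrib] using this
    · simp [hij, Ne.symm hij, fun hji : j = i => hij hji.symm]
  -- conjugation identity
  have hconj : Q * (1 - h • (M * Fm)) * Q⁻¹ = 1 + h • (M * Fmᵀ) := by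
    have h1 : Q * (1 - h • (M * Fm)) = (1 + h • (M * Fmᵀ)) * Q := by
      rw [Matrix.mul_sub, Matrix.add_mul, Matrix.mul_one, Matrix.one_mul,
        Matrix.mul_smul, Matrix.smul_mul, ← Matrix.mul_assoc, hQM,
        Matrix.mul_assoc, hQF]
      rw [Matrix.neg_mul, Matrix.mul_neg, smul_neg, sub_neg_eq_add,
        Matrix.mul_assoc]
    rw [h1, Matrix.mul_assoc, Matrix.mul_nonsing_inv Q hQdet, Matrix.mul_one]
  have e1 : (1 - h • (M * Fm)).det = (1 + h • (M * Fmᵀ)).det := by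
    rw [← Matrix.det_conj hQunit (1 - h • (M * Fm)), hconj]
  rw [e1]
  -- transpose
  have e2 : (1 + h • (M * Fmᵀ)).det = (1 + h • (Fm * Mᵀ)).det := by
    rw [← Matrix.det_transpose (1 + h • (M * Fmᵀ))]
    congr 1
    rw [Matrix.transpose_add, Matrix.transpose_one, Matrix.transpose_smul,
      Matrix.transpose_mul, Matrix.transpose_transpose]
  rw [e2]
  have hMT : Mᵀ = Aᵀ ⊗ₖ (1 : Matrix (Fin n) (Fin n) ℝ) := by
    rw [hM, ← Matrix.kroneckerMap_transpose, Matrix.transpose_one]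
  rw [hMT]
  -- commute inside det
  rw [show h • (Fm * (Aᵀ ⊗ₖ (1 : Matrix (Fin n) (Fin n) ℝ)))
        = (h • Fm) * (Aᵀ ⊗ₖ (1 : Matrix (Fin n) (Fin n) ℝ)) from
      (Matrix.smul_mul h Fm _).symm,
    Matrix.det_one_add_mul_comm, Matrix.mul_smul]
end

section
/- Let A ∈ ℝ^{2×2} and let P ∈ ℝ^{n×n} be invertible with P F_i P⁻¹ = -F_i for i = 1, 2, where F₁, F₂ ∈ ℝ^{n×n}. Then det(I - h a₁₁ F₁ - h a₂₂ F₂ + h² det(A) F₁ F₂) = det(I + h a₁₁ F₁ + h a₂₂ F₂ + h² det(A) F₁ F₂). -/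
open Matrix

theorem stmt_13 {n : ℕ} (A : Matrix (Fin 2) (Fin 2) ℝ)
    (P : Matrix (Fin n) (Fin n) ℝ) (hP : IsUnit P.det)
    (F₁ F₂ : Matrix (Fin n) (Fin n) ℝ)
    (hF₁ : P * F₁ * P⁻¹ = -F₁) (hF₂ : P * F₂ * P⁻¹ = -F₂) (h : ℝ) :
    ((1 : Matrix (Fin n) (Fin n) ℝ) - (h * A 0 0) • F₁ - (h * A 1 1) • F₂
        + (h ^ 2 * A.det) • (F₁ * F₂)).det
      = ((1 : Matrix (Fin n) (Fin n) ℝ) + (h * A 0 0) • F₁ + (h * A 1 1) • F₂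
        + (h ^ 2 * A.det) • (F₁ * F₂)).det := by
  have hinv : P⁻¹ * P = 1 := nonsing_inv_mul P hP
  have hFF : P * (F₁ * F₂) * P⁻¹ = F₁ * F₂ := by
    have : P * (F₁ * F₂) * P⁻¹ = (P * F₁ * P⁻¹) * (P * F₂ * P⁻¹) := by
      rw [show (P * F₁ * P⁻¹) * (P * F₂ * P⁻¹) = P * F₁ * (P⁻¹ * P) * F₂ * P⁻¹ by
          noncomm_ring, hinv]
      noncomm_ring
    rw [this, hF₁, hF₂, neg_mul_neg]
  have key : P * ((1 : Matrix (Fin n) (Fin n) ℝ) - (h * A 0 0) • F₁ - (h * A 1 1) • F₂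
        + (h ^ 2 * A.det) • (F₁ * F₂)) * P⁻¹
      = (1 : Matrix (Fin n) (Fin n) ℝ) + (h * A 0 0) • F₁ + (h * A 1 1) • F₂
        + (h ^ 2 * A.det) • (F₁ * F₂) := by
    have h1 : P * (1 : Matrix (Fin n) (Fin n) ℝ) * P⁻¹ = 1 := by
      rw [mul_one, mul_nonsing_inv P hP]
    calc P * ((1 : Matrix (Fin n) (Fin n) ℝ) - (h * A 0 0) • F₁ - (h * A 1 1) • F₂
        + (h ^ 2 * A.det) • (F₁ * F₂)) * P⁻¹
        = P * 1 * P⁻¹ - (h * A 0 0) • (P * F₁ * P⁻¹) - (h * A 1 1) • (P * F₂ * P⁻¹)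
          + (h ^ 2 * A.det) • (P * (F₁ * F₂) * P⁻¹) := by
          simp only [Matrix.mul_sub, Matrix.sub_mul, Matrix.mul_add, Matrix.add_mul,
            Matrix.mul_smul, Matrix.smul_mul]
      _ = _ := by rw [h1, hF₁, hF₂, hFF]; simp [sub_neg_eq_add, smul_neg]
  rw [← Matrix.det_conj ((Matrix.isUnit_iff_isUnit_det P).mpr hP) ((1 : Matrix (Fin n) (Fin n) ℝ) - (h * A 0 0) • F₁
    - (h * A 1 1) • F₂ + (h ^ 2 * A.det) • (F₁ * F₂)), key]
end

section
/- For matrices C₁, C₂ ∈ ℝ^{n×n} and A = (a_{ij}) ∈ ℝ^{2×2}, det of the 2×2 block matrix [[I - h a₁₁ C₁, -h a₁₂ C₂], [-h a₂₁ C₁, I - h a₂₂ C₂]] equals det(I - h a₁₁ C₁ - h a₂₂ C₂ + h² det(A) C₁ C₂). -/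
open Matrix Polynomial

lemma aux1 {n : ℕ} {R : Type*} [CommRing R] (U V W X : Matrix (Fin n) (Fin n) R)
    (hc : W * U = U * W) :
    U.det * (fromBlocks U V W X).det = U.det * (U * X - W * V).det := by
  have key : fromBlocks (1 : Matrix (Fin n) (Fin n) R) 0 (-W) U * fromBlocks U V W X
      = fromBlocks U V 0 (U * X - W * V) := by
    rw [fromBlocks_multiply]
    simp [hc, sub_eq_neg_add]
  have := congrArg Matrix.det key
  rw [det_mul, det_fromBlocks_zero₁₂, det_fromBlocks_zero₂₁, det_one, one_mul] at this
  linear_combination this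

lemma aux2 {n : ℕ} (U V W X : Matrix (Fin n) (Fin n) ℝ) (hc : W * U = U * W) :
    (fromBlocks U V W X).det = (U * X - W * V).det := by
  let f : ℝ →+* ℝ[X] := Polynomial.C
  let U' : Matrix (Fin n) (Fin n) ℝ[X] := (Polynomial.X : ℝ[X]) • 1 + U.map f
  let V' := V.map f; let W' := W.map f; let X' := X.map f
  have hc' : W' * U' = U' * W' := by
    simp only [U', W', Matrix.mul_add, Matrix.add_mul, Matrix.mul_smul, Matrix.smul_mul,
      Matrix.mul_one, Matrix.one_mul, ← Matrix.map_mul, hc]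
  have hU' : U'.det ≠ 0 := by
    have : U' = charmatrix (-U) := by
      ext i j
      by_cases hij : i = j <;>
        simp [U', charmatrix, f, Matrix.add_apply, Matrix.smul_apply, Matrix.one_apply,
          Matrix.sub_apply, diagonal, hij]
    rw [this]
    exact ((-U).charpoly_monic).ne_zero
  have key := aux1 U' V' W' X' hc'
  have key2 : (fromBlocks U' V' W' X').det = (U' * X' - W' * V').det :=
    mul_left_cancel₀ hU' key
  have e1 : (fromBlocks U' V' W' X').map (Polynomial.evalRingHom 0) = fromBlocks U V W X := by
    ext i j
    rcases i with i | i <;> rcases j with j | j <;>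
      simp [U', V', W', X', f, Matrix.map_apply, Matrix.add_apply, Matrix.smul_apply,
        Matrix.one_apply, apply_ite]
  have e2 : (U' * X' - W' * V').map (Polynomial.evalRingHom 0) = U * X - W * V := by
    ext i j
    simp [U', V', W', X', f, Matrix.sub_apply, Matrix.mul_apply, Matrix.add_apply,
      Matrix.smul_apply, Matrix.one_apply, Polynomial.eval_finset_sum, apply_ite,
      mul_comm, ite_mul]
  rw [← e1, ← e2, ← RingHom.mapMatrix_apply, ← RingHom.mapMatrix_apply, ← RingHom.map_det,
    ← RingHom.map_det, key2]

theorem stmt_14 {n : ℕ} (C₁ C₂ : Matrix (Fin n) (Fin n) ℝ)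
    (A : Matrix (Fin 2) (Fin 2) ℝ) (h : ℝ) :
    (Matrix.fromBlocks
        ((1 : Matrix (Fin n) (Fin n) ℝ) - (h * A 0 0) • C₁) (-((h * A 0 1) • C₂))
        (-((h * A 1 0) • C₁)) ((1 : Matrix (Fin n) (Fin n) ℝ) - (h * A 1 1) • C₂)).det
      = ((1 : Matrix (Fin n) (Fin n) ℝ) - (h * A 0 0) • C₁ - (h * A 1 1) • C₂
        + (h ^ 2 * A.det) • (C₁ * C₂)).det := by
  rw [aux2]
  · congr 1
    rw [Matrix.det_fin_two A]
    simp only [Matrix.mul_sub, Matrix.sub_mul, Matrix.mul_one, Matrix.one_mul,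
      Matrix.mul_smul, Matrix.smul_mul, Matrix.neg_mul, Matrix.mul_neg, smul_smul,
      neg_neg, sub_neg_eq_add, smul_neg]
    module
  · simp only [Matrix.mul_sub, Matrix.sub_mul, Matrix.mul_one, Matrix.one_mul,
      Matrix.mul_smul, Matrix.smul_mul, Matrix.neg_mul, Matrix.mul_neg, smul_smul,
      neg_neg, mul_comm, smul_sub]
    module
end

section
/- If f : ℝ^n → ℝ^n is continuously differentiable with det(I + (h/2)f'(x)) = det(I - (h/2)f'(x)) for all x and h > 0, and φ_h is the implicit midpoint map, i.e. φ_h(x) = x + h f((x + φ_h(x))/2) with φ_h differentiable and det(I - (h/2) f'((x+φ_h(x))/2)) ≠ 0, then det(φ_h'(x)) = 1 for all x. -/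
open Matrix

/-- The Jacobian matrix of a map `f : ℝ^n → ℝ^n` at a point `x`. -/
noncomputable def jacobian {ι : Type*} [Fintype ι] [DecidableEq ι]
    (f : (ι → ℝ) → (ι → ℝ)) (x : ι → ℝ) : Matrix ι ι ℝ :=
  Matrix.of fun i j => fderiv ℝ f x (Pi.single j 1) i

lemma jacobian_eq_toMatrix {n : ℕ} (f : (Fin n → ℝ) → (Fin n → ℝ)) (x : Fin n → ℝ) :
    jacobian f x = LinearMap.toMatrix'
      ((fderiv ℝ f x : (Fin n → ℝ) →L[ℝ] (Fin n → ℝ)) : (Fin n → ℝ) →ₗ[ℝ] (Fin n → ℝ)) := by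
  ext i j
  rw [jacobian, LinearMap.toMatrix'_apply]
  simp only [Matrix.of_apply]
  have e : (fun j' => if j' = j then (1:ℝ) else 0) = Pi.single j 1 :=
    funext fun j' => (Pi.single_apply j (1:ℝ) j').symm
  rfl

theorem stmt_15 {n : ℕ} (f : (Fin n → ℝ) → (Fin n → ℝ)) (hf : ContDiff ℝ 1 f)
    (hdet : ∀ (x : Fin n → ℝ) (h : ℝ), 0 < h →
      ((1 : Matrix (Fin n) (Fin n) ℝ) + (h / 2) • jacobian f x).det
        = ((1 : Matrix (Fin n) (Fin n) ℝ) - (h / 2) • jacobian f x).det)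
    (h : ℝ) (hh : 0 < h)
    (φ : (Fin n → ℝ) → (Fin n → ℝ)) (hφ : Differentiable ℝ φ)
    (hmid : ∀ x, φ x = x + h • f ((1 / 2 : ℝ) • (x + φ x)))
    (hinv : ∀ x,
      ((1 : Matrix (Fin n) (Fin n) ℝ)
        - (h / 2) • jacobian f ((1 / 2 : ℝ) • (x + φ x))).det ≠ 0) :
    ∀ x, (jacobian φ x).det = 1 := by
  intro x
  have hf' : Differentiable ℝ f := hf.differentiable one_ne_zero
  have hg : HasFDerivAt (fun y => (1 / 2 : ℝ) • (y + φ y))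
      ((1 / 2 : ℝ) • (ContinuousLinearMap.id ℝ (Fin n → ℝ) + fderiv ℝ φ x)) x :=
    ((hasFDerivAt_id x).add (hφ x).hasFDerivAt).const_smul (1 / 2 : ℝ)
  have h1 : HasFDerivAt φ
      (ContinuousLinearMap.id ℝ (Fin n → ℝ) +
        h • ((fderiv ℝ f ((1 / 2 : ℝ) • (x + φ x))).comp
          ((1 / 2 : ℝ) • (ContinuousLinearMap.id ℝ (Fin n → ℝ) + fderiv ℝ φ x)))) x := by
    have h2 : HasFDerivAt (fun y => y + h • f ((1 / 2 : ℝ) • (y + φ y)))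
        (ContinuousLinearMap.id ℝ (Fin n → ℝ) +
          h • ((fderiv ℝ f ((1 / 2 : ℝ) • (x + φ x))).comp
            ((1 / 2 : ℝ) • (ContinuousLinearMap.id ℝ (Fin n → ℝ) + fderiv ℝ φ x)))) x :=
      (hasFDerivAt_id x).add
        ((((hf' ((1 / 2 : ℝ) • (x + φ x))).hasFDerivAt).comp x hg).const_smul h)
    exact h2.congr_of_eventuallyEq (Filter.Eventually.of_forall hmid)
  have hD : fderiv ℝ φ x =
      ContinuousLinearMap.id ℝ (Fin n → ℝ) +
        h • ((fderiv ℝ f ((1 / 2 : ℝ) • (x + φ x))).comp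
          ((1 / 2 : ℝ) • (ContinuousLinearMap.id ℝ (Fin n → ℝ) + fderiv ℝ φ x))) :=
    (hφ x).hasFDerivAt.unique h1
  set L : (Fin n → ℝ) →L[ℝ] (Fin n → ℝ) := fderiv ℝ φ x with hL
  set F : (Fin n → ℝ) →L[ℝ] (Fin n → ℝ) := fderiv ℝ f ((1 / 2 : ℝ) • (x + φ x)) with hF
  have hJ : jacobian φ x =
      1 + h • (jacobian f ((1 / 2 : ℝ) • (x + φ x)) *
        ((1 / 2 : ℝ) • (1 + jacobian φ x))) := by
    have := congrArg
      (fun T : (Fin n → ℝ) →L[ℝ] (Fin n → ℝ) =>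
        LinearMap.toMatrix' (T : (Fin n → ℝ) →ₗ[ℝ] (Fin n → ℝ))) hD
    simp only [ContinuousLinearMap.coe_add, ContinuousLinearMap.coe_smul,
      ContinuousLinearMap.toLinearMap_comp, ContinuousLinearMap.coe_id, map_add,
      _root_.map_smul, LinearMap.toMatrix'_comp, LinearMap.toMatrix'_id] at this
    rw [jacobian_eq_toMatrix φ x, jacobian_eq_toMatrix f ((1 / 2 : ℝ) • (x + φ x)), ← hL, ← hF]
    exact this
  set A : Matrix (Fin n) (Fin n) ℝ := jacobian f ((1 / 2 : ℝ) • (x + φ x)) with hA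
  set J : Matrix (Fin n) (Fin n) ℝ := jacobian φ x with hJdef
  have hJ' : J = 1 + (h / 2) • A + (h / 2) • (A * J) := by
    conv_lhs => rw [hJ]
    rw [Matrix.mul_smul, mul_add, mul_one, smul_smul, smul_add, ← add_assoc,
      show h * (1 / 2) = h / 2 by ring]
  have key : ((1 : Matrix (Fin n) (Fin n) ℝ) - (h / 2) • A) * J = 1 + (h / 2) • A := by
    rw [sub_mul, one_mul, Matrix.smul_mul, sub_eq_iff_eq_add]
    exact hJ'
  have hdet2 := congrArg Matrix.det key
  rw [Matrix.det_mul, hdet ((1 / 2 : ℝ) • (x + φ x)) h hh] at hdet2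
  have hne := hinv x
  exact mul_left_cancel₀ hne (by rw [mul_one]; exact hdet2)
end

section
/- Let f : ℝ^n → ℝ^n be a quadratic vector field (so f' is affine) satisfying det(I + (h/2)f'(x)) = det(I - (h/2)f'(x)) for all x, and let φ_h satisfy Kahan's relation (φ_h(x) - x)/h = 2f((x + φ_h(x))/2) - (1/2)f(x) - (1/2)f(φ_h(x)), with φ_h differentiable and the relevant matrices invertible. Then det(φ_h'(x)) · μ(φ_h(x)) = μ(x) where μ(x) = det(I - (h/2)f'(x))⁻¹. -/
open Matrix

section aux
variable {n : ℕ}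

lemma clm_apply_eq_sum (T : (Fin n → ℝ) →L[ℝ] (Fin n → ℝ)) (w : Fin n → ℝ) (i : Fin n) :
    T w i = ∑ k, w k * T (Pi.single k 1) i := by
  have hw : w = ∑ k, w k • (Pi.single k (1:ℝ) : Fin n → ℝ) := by
    funext j
    simp [Finset.sum_apply, Pi.single_apply]
  conv_lhs => rw [hw]
  rw [map_sum]
  simp [Finset.sum_apply]

variable (q : (Fin n → ℝ) →ₗ[ℝ] (Fin n → ℝ) →ₗ[ℝ] (Fin n → ℝ))
variable (L : (Fin n → ℝ) →ₗ[ℝ] (Fin n → ℝ))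

noncomputable def Qc : (Fin n → ℝ) →L[ℝ] (Fin n → ℝ) →L[ℝ] (Fin n → ℝ) :=
  LinearMap.toContinuousLinearMap
    { toFun := fun x => LinearMap.toContinuousLinearMap (q x),
      map_add' := by intro a b; ext v; simp,
      map_smul' := by intro c a; ext v; simp }

noncomputable def Dm : (Fin n → ℝ) → (Fin n → ℝ) →L[ℝ] (Fin n → ℝ) :=
  fun z => Qc q z + (Qc q).flip z + LinearMap.toContinuousLinearMap L

lemma hDm (z v : Fin n → ℝ) : Dm q L z v = q z v + q v z + L v := rfl

lemma hfd (f : (Fin n → ℝ) → (Fin n → ℝ)) (d : Fin n → ℝ)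
    (hquad : ∀ x, f x = q x x + L x + d) (z : Fin n → ℝ) :
    HasFDerivAt f (Dm q L z) z := by
  have h1 : HasFDerivAt (fun y : Fin n → ℝ => Qc q y y) (Qc q z + (Qc q).flip z) z := by
    have hb := (Qc q).isBoundedBilinearMap
    have hprod : HasFDerivAt (fun y : Fin n → ℝ => (y, y))
        ((ContinuousLinearMap.id ℝ (Fin n → ℝ)).prod (ContinuousLinearMap.id ℝ (Fin n → ℝ))) z :=
      HasFDerivAt.prodMk (hasFDerivAt_id z) (hasFDerivAt_id z)
    have hc : HasFDerivAt
        ((fun p : (Fin n → ℝ) × (Fin n → ℝ) => Qc q p.1 p.2) ∘ (fun y : Fin n → ℝ => (y, y)))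
        ((hb.deriv (z,z)).comp
          ((ContinuousLinearMap.id ℝ (Fin n → ℝ)).prod (ContinuousLinearMap.id ℝ (Fin n → ℝ)))) z :=
      HasFDerivAt.comp z (hb.hasFDerivAt (z,z)) hprod
    have hder : (hb.deriv (z,z)).comp
        ((ContinuousLinearMap.id ℝ (Fin n → ℝ)).prod (ContinuousLinearMap.id ℝ (Fin n → ℝ)))
        = Qc q z + (Qc q).flip z := by
      ext v
      simp [IsBoundedBilinearMap.deriv_apply]
    rw [← hder]
    exact hc
  have h2 : HasFDerivAt (fun y : Fin n → ℝ => Qc q y y + L y + d) (Dm q L z) z :=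
    (h1.add (LinearMap.toContinuousLinearMap L).hasFDerivAt).add_const d
  have hf : f = fun y : Fin n → ℝ => Qc q y y + L y + d := funext fun y => hquad y
  rw [hf]
  exact h2

end aux

theorem stmt_17 {n : ℕ} (f : (Fin n → ℝ) → (Fin n → ℝ))
    (q : (Fin n → ℝ) →ₗ[ℝ] (Fin n → ℝ) →ₗ[ℝ] (Fin n → ℝ))
    (hq : ∀ x y, q x y = q y x)
    (L : (Fin n → ℝ) →ₗ[ℝ] (Fin n → ℝ)) (d : Fin n → ℝ)
    (hquad : ∀ x, f x = q x x + L x + d)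
    (h : ℝ)
    (hdet : ∀ x : Fin n → ℝ,
      ((1 : Matrix (Fin n) (Fin n) ℝ) + (h / 2) • jacobian f x).det
        = ((1 : Matrix (Fin n) (Fin n) ℝ) - (h / 2) • jacobian f x).det)
    (φ : (Fin n → ℝ) → (Fin n → ℝ)) (hφ : Differentiable ℝ φ)
    (hkahan : ∀ x, φ x - x
      = h • ((2 : ℝ) • f ((1 / 2 : ℝ) • (x + φ x))
          - (1 / 2 : ℝ) • f x - (1 / 2 : ℝ) • f (φ x)))
    (hinv1 : ∀ x, ((1 : Matrix (Fin n) (Fin n) ℝ) - (h / 2) • jacobian f x).det ≠ 0)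
    (hinv2 : ∀ x, ((1 : Matrix (Fin n) (Fin n) ℝ)
        + (h / 2) • jacobian f (φ x)
        - (h / 2) • jacobian f ((1 / 2 : ℝ) • (x + φ x))).det ≠ 0) :
    ∀ x, (jacobian φ x).det *
        (((1 : Matrix (Fin n) (Fin n) ℝ) - (h / 2) • jacobian f (φ x)).det)⁻¹
      = (((1 : Matrix (Fin n) (Fin n) ℝ) - (h / 2) • jacobian f x).det)⁻¹ := by
  classical
  intro x
  have hfd' : ∀ z, HasFDerivAt f (Dm q L z) z := hfd q L f d hquad
  have hjac : ∀ z, jacobian f z = Matrix.of fun i j => Dm q L z (Pi.single j 1) i := by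
    intro z
    simp only [jacobian, (hfd' z).fderiv]
  have hφx : HasFDerivAt φ (fderiv ℝ φ x) x := (hφ x).hasFDerivAt
  set P := fderiv ℝ φ x with hP
  have hm : HasFDerivAt (fun z : Fin n → ℝ => (1/2:ℝ) • (z + φ z))
      ((1/2:ℝ) • (ContinuousLinearMap.id ℝ (Fin n → ℝ) + P)) x :=
    ((hasFDerivAt_id x).add hφx).const_smul (1/2:ℝ)
  have h1 : HasFDerivAt (f ∘ (fun z : Fin n → ℝ => (1/2:ℝ) • (z + φ z)))
      ((Dm q L ((1/2:ℝ) • (x + φ x))).comp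
        ((1/2:ℝ) • (ContinuousLinearMap.id ℝ (Fin n → ℝ) + P))) x :=
    HasFDerivAt.comp x (hfd' _) hm
  have h3 : HasFDerivAt (f ∘ φ) ((Dm q L (φ x)).comp P) x :=
    HasFDerivAt.comp x (hfd' _) hφx
  have hG : HasFDerivAt
      (fun z : Fin n → ℝ => h • ((2:ℝ) • f ((1/2:ℝ) • (z + φ z))
        - (1/2:ℝ) • f z - (1/2:ℝ) • f (φ z)))
      (h • ((2:ℝ) • ((Dm q L ((1/2:ℝ) • (x + φ x))).comp
          ((1/2:ℝ) • (ContinuousLinearMap.id ℝ (Fin n → ℝ) + P)))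
        - (1/2:ℝ) • Dm q L x - (1/2:ℝ) • ((Dm q L (φ x)).comp P))) x :=
    (((h1.const_smul (2:ℝ)).sub ((hfd' x).const_smul (1/2:ℝ))).sub
      (h3.const_smul (1/2:ℝ))).const_smul h
  have hL : HasFDerivAt (fun z => φ z - z) (P - ContinuousLinearMap.id ℝ (Fin n → ℝ)) x :=
    hφx.sub (hasFDerivAt_id x)
  have huniq : P - ContinuousLinearMap.id ℝ (Fin n → ℝ)
      = h • ((2:ℝ) • ((Dm q L ((1/2:ℝ) • (x + φ x))).comp
          ((1/2:ℝ) • (ContinuousLinearMap.id ℝ (Fin n → ℝ) + P)))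
        - (1/2:ℝ) • Dm q L x - (1/2:ℝ) • ((Dm q L (φ x)).comp P)) := by
    refine hL.unique ?_
    have heq : (fun z => φ z - z) = fun z : Fin n → ℝ => h • ((2:ℝ) • f ((1/2:ℝ) • (z + φ z))
        - (1/2:ℝ) • f z - (1/2:ℝ) • f (φ z)) := by
      funext z
      simpa using hkahan z
    rw [heq]
    exact hG
  have key : ∀ v : Fin n → ℝ,
      P v - (h/2) • (Dm q L x) (P v) = v + (h/2) • (Dm q L (φ x)) v := by
    intro v
    have h0 : P v - v
        = (h • ((2:ℝ) • ((Dm q L ((1/2:ℝ) • (x + φ x))).comp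
            ((1/2:ℝ) • (ContinuousLinearMap.id ℝ (Fin n → ℝ) + P)))
          - (1/2:ℝ) • Dm q L x - (1/2:ℝ) • ((Dm q L (φ x)).comp P))) v := by
      rw [← huniq]
      simp
    calc P v - (h/2) • (Dm q L x) (P v)
        = (P v - v) + v - (h/2) • (Dm q L x) (P v) := by abel
      _ = v + (h/2) • (Dm q L (φ x)) v := by
          rw [h0]
          simp only [ContinuousLinearMap.smul_apply, ContinuousLinearMap.sub_apply,
            ContinuousLinearMap.add_apply, ContinuousLinearMap.comp_apply,
            ContinuousLinearMap.coe_id', id_eq, hDm, map_add, _root_.map_smul,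
            LinearMap.add_apply, LinearMap.smul_apply]
          rw [hq v x, hq (P v) x, hq v (φ x), hq (P v) (φ x)]
          module
  have hmat : ((1 : Matrix (Fin n) (Fin n) ℝ) - (h/2) • jacobian f x) * jacobian φ x
      = 1 + (h/2) • jacobian f (φ x) := by
    ext i j
    have hPj : ∀ k, jacobian φ x k j = P (Pi.single j 1) k := fun k => rfl
    have keyc := congrFun (key (Pi.single j 1)) i
    simp only [Pi.add_apply, Pi.sub_apply, Pi.smul_apply, smul_eq_mul] at keyc
    rw [clm_apply_eq_sum (Dm q L x) (P (Pi.single j 1)) i] at keyc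
    rw [Matrix.mul_apply]
    simp only [hjac, Matrix.sub_apply, Matrix.add_apply, Matrix.one_apply,
      Matrix.smul_apply, Matrix.of_apply, smul_eq_mul, hPj]
    calc ∑ k, (((if i = k then (1:ℝ) else 0) - h/2 * Dm q L x (Pi.single k 1) i)
            * P (Pi.single j 1) k)
        = (∑ k, (if i = k then (1:ℝ) else 0) * P (Pi.single j 1) k)
          - h/2 * ∑ k, P (Pi.single j 1) k * Dm q L x (Pi.single k 1) i := by
          rw [Finset.mul_sum, ← Finset.sum_sub_distrib]
          exact Finset.sum_congr rfl fun k _ => by ring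
      _ = P (Pi.single j 1) i - h/2 * ∑ k, P (Pi.single j 1) k * Dm q L x (Pi.single k 1) i := by
          congr 1
          simp [ite_mul]
      _ = (if i = j then 1 else 0) + h/2 * Dm q L (φ x) (Pi.single j 1) i := by
          rw [keyc]
          simp [Pi.single_apply]
  have hdetm : ((1 : Matrix (Fin n) (Fin n) ℝ) - (h/2) • jacobian f x).det * (jacobian φ x).det
      = ((1 : Matrix (Fin n) (Fin n) ℝ) - (h/2) • jacobian f (φ x)).det := by
    rw [← Matrix.det_mul, hmat, hdet (φ x)]
  have hd1 := hinv1 x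
  have hd2 := hinv1 (φ x)
  field_simp
  linear_combination hdetm
end

section
/- For a quadratic vector field f(x) = q(x,x) + Lx + d with q symmetric bilinear, and coefficients b_i, c_i with Σb_i = 1, Σb_i c_i = 1/2, Σb_i c_i² = 0, any solution x' of x' = x + h Σ_i b_i f(x + c_i(x'-x)) satisfies Kahan's relation (x'-x)/h = q(x,x') + (1/2)L(x+x') + d. -/
theorem stmt_18 {n s : ℕ}
    (q : (Fin n → ℝ) →ₗ[ℝ] (Fin n → ℝ) →ₗ[ℝ] (Fin n → ℝ))
    (hq : ∀ x y, q x y = q y x)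
    (L : (Fin n → ℝ) →ₗ[ℝ] (Fin n → ℝ)) (d : Fin n → ℝ)
    (f : (Fin n → ℝ) → (Fin n → ℝ))
    (hf : ∀ x, f x = q x x + L x + d)
    (b c : Fin s → ℝ)
    (hb : ∑ i, b i = 1) (hbc : ∑ i, b i * c i = 1 / 2)
    (hbc2 : ∑ i, b i * c i ^ 2 = 0)
    (h : ℝ) (x x' : Fin n → ℝ)
    (hx' : x' = x + h • ∑ i, b i • f (x + c i • (x' - x))) :
    x' - x = h • (q x x' + (1 / 2 : ℝ) • L (x + x') + d) := by
  set v := x' - x with hv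
  have key : ∑ i, b i • f (x + c i • v) = q x x' + (1 / 2 : ℝ) • L (x + x') + d := by
    have expand : ∀ i, b i • f (x + c i • v) =
        b i • q x x + (b i * c i) • ((2:ℝ) • q x v) + (b i * c i ^ 2) • q v v
          + b i • L x + (b i * c i) • L v + b i • d := by
      intro i
      rw [hf]
      simp only [map_add, map_smul, LinearMap.add_apply, LinearMap.smul_apply]
      rw [hq v x]
      module
    rw [Finset.sum_congr rfl (fun i _ => expand i)]
    simp only [Finset.sum_add_distrib, ← Finset.sum_smul, hb, hbc, hbc2]
    have h1 : q x x' = q x x + q x v := by rw [hv]; simp [map_sub]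
    have h2 : L (x + x') = L x + L x + L v := by
      rw [hv]; simp [map_add, map_sub]
    rw [h1, h2]
    module
  rw [← key]
  conv_lhs => rw [hv, hx']
  exact add_sub_cancel_left x _
end
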